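/- For the spin coherent state |ℓ n⟩ = |n⟩^{⊗2ℓ} in the symmetric tensor power of ℂ², the expectation values and total variance satisfy ⟨ℓ n| L_i |ℓ n⟩ = ℏℓ n_i and Σ_i (⟨L_i²⟩ - ⟨L_i⟩²) = ℏ²ℓ, so the relative uncertainty Σ_i ΔL_i² / ⟨L²⟩ = 1/(ℓ+1) tends to 0 as ℓ → ∞. -/
import Mathlib


open Complex Finset Matrix Filter

/-- The standard Pauli matrices `σ_x, σ_y, σ_z`. -/
noncomputable def pauli : Fin 3 → Matrix (Fin 2) (Fin 2) ℂ :=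
  ![!![0, 1; 1, 0], !![0, -Complex.I; Complex.I, 0], !![1, 0; 0, -1]]

/-- `σ_i^{(p)}`: `σ_i` acting on the `p`-th factor of `(ℂ²)^{⊗2ℓ}`. -/
noncomputable def pauliAt (ℓ : ℕ) (p : Fin (2 * ℓ)) (i : Fin 3) :
    Matrix (Fin (2 * ℓ) → Fin 2) (Fin (2 * ℓ) → Fin 2) ℂ :=
  fun f g => ∏ q : Fin (2 * ℓ),
    if q = p then pauli i (f q) (g q) else (if f q = g q then 1 else 0)

/-- The angular momentum operator `L_i = (ℏ/2) Σ_{p=1}^{2ℓ} σ_i^{(p)}`. -/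
noncomputable def Lop (ℏ : ℝ) (ℓ : ℕ) (i : Fin 3) :
    Matrix (Fin (2 * ℓ) → Fin 2) (Fin (2 * ℓ) → Fin 2) ℂ :=
  ((ℏ : ℂ) / 2) • ∑ p : Fin (2 * ℓ), pauliAt ℓ p i

/-- The product state `|n⟩^{⊗2ℓ}` in the standard tensor basis. -/
def tensorPowerState (ℓ : ℕ) (n : Fin 2 → ℂ) : (Fin (2 * ℓ) → Fin 2) → ℂ :=
  fun f => ∏ p : Fin (2 * ℓ), n (f p)

/-- The expectation value `⟨ℓ n| M |ℓ n⟩` of an operator `M` in `|n⟩^{⊗2ℓ}`. -/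
noncomputable def expec (ℓ : ℕ) (n : Fin 2 → ℂ)
    (M : Matrix (Fin (2 * ℓ) → Fin 2) (Fin (2 * ℓ) → Fin 2) ℂ) : ℂ :=
  ∑ f : Fin (2 * ℓ) → Fin 2,
    star (tensorPowerState ℓ n f) * (M.mulVec (tensorPowerState ℓ n) f)

-- AUX

noncomputable def kron (N : ℕ) (A : Fin N → Matrix (Fin 2) (Fin 2) ℂ) :
    Matrix (Fin N → Fin 2) (Fin N → Fin 2) ℂ :=
  fun f g => ∏ q, A q (f q) (g q)

lemma sum_prod_eq {N : ℕ} (F : Fin N → Fin 2 → ℂ) :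
    ∑ f : Fin N → Fin 2, ∏ q, F q (f q) = ∏ q, ∑ a, F q a := by
  rw [Finset.prod_univ_sum, Fintype.piFinset_univ]

lemma kron_mul {N : ℕ} (A B : Fin N → Matrix (Fin 2) (Fin 2) ℂ) :
    kron N A * kron N B = kron N (fun q => A q * B q) := by
  ext f g
  show ∑ h : Fin N → Fin 2, kron N A f h * kron N B h g = _
  calc ∑ h : Fin N → Fin 2, kron N A f h * kron N B h g
      = ∑ h : Fin N → Fin 2, ∏ q, (A q (f q) (h q) * B q (h q) (g q)) := by
        refine Finset.sum_congr rfl fun h _ => ?_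
        rw [Finset.prod_mul_distrib]; rfl
    _ = ∏ q, ∑ b, A q (f q) b * B q b (g q) :=
        sum_prod_eq (fun q b => A q (f q) b * B q b (g q))
    _ = ∏ q, (A q * B q) (f q) (g q) := by
        refine Finset.prod_congr rfl fun q _ => (Matrix.mul_apply).symm

lemma pauliAt_eq (ℓ : ℕ) (p : Fin (2 * ℓ)) (i : Fin 3) :
    pauliAt ℓ p i = kron (2 * ℓ) (fun q => if q = p then pauli i else 1) := by
  funext f g
  refine Finset.prod_congr rfl fun q _ => ?_
  by_cases h : q = p <;> simp [h, Matrix.one_apply]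

noncomputable def exp1 (n : Fin 2 → ℂ) (A : Matrix (Fin 2) (Fin 2) ℂ) : ℂ :=
  ∑ a, ∑ b, star (n a) * A a b * n b

lemma expec_kron (ℓ : ℕ) (n : Fin 2 → ℂ) (A : Fin (2 * ℓ) → Matrix (Fin 2) (Fin 2) ℂ) :
    expec ℓ n (kron (2 * ℓ) A) = ∏ q, exp1 n (A q) := by
  unfold expec exp1
  calc ∑ f : Fin (2*ℓ) → Fin 2,
      star (tensorPowerState ℓ n f) * ((kron (2*ℓ) A).mulVec (tensorPowerState ℓ n) f)
      = ∑ f : Fin (2*ℓ) → Fin 2, ∏ q, ∑ b, star (n (f q)) * A q (f q) b * n b := by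
        refine Finset.sum_congr rfl fun f _ => ?_
        show star (tensorPowerState ℓ n f) *
            (∑ g : Fin (2*ℓ) → Fin 2, kron (2*ℓ) A f g * tensorPowerState ℓ n g) = _
        rw [Finset.mul_sum, ← sum_prod_eq (fun q b => star (n (f q)) * A q (f q) b * n b)]
        refine Finset.sum_congr rfl fun g _ => ?_
        unfold tensorPowerState kron
        rw [star_prod, ← Finset.prod_mul_distrib, ← Finset.prod_mul_distrib]
        exact Finset.prod_congr rfl fun q _ => by ring
    _ = ∏ q, ∑ a, ∑ b, star (n a) * A q a b * n b :=
        sum_prod_eq (fun q a => ∑ b, star (n a) * A q a b * n b)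

lemma expec_eq (ℓ : ℕ) (n : Fin 2 → ℂ) (M) :
    expec ℓ n M = ∑ f : Fin (2*ℓ) → Fin 2, ∑ g : Fin (2*ℓ) → Fin 2,
      star (tensorPowerState ℓ n f) * M f g * tensorPowerState ℓ n g := by
  unfold expec Matrix.mulVec dotProduct
  simp only [Finset.mul_sum, mul_assoc]

lemma expec_sum (ℓ : ℕ) (n : Fin 2 → ℂ) {ι : Type*} (s : Finset ι)
    (M : ι → Matrix (Fin (2*ℓ) → Fin 2) (Fin (2*ℓ) → Fin 2) ℂ) :
    expec ℓ n (∑ p ∈ s, M p) = ∑ p ∈ s, expec ℓ n (M p) := by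
  simp only [expec_eq, Matrix.sum_apply, Finset.sum_mul, Finset.mul_sum]
  exact Eq.trans (Finset.sum_congr rfl fun f _ => Finset.sum_comm)
    Finset.sum_comm

lemma expec_smul (ℓ : ℕ) (n : Fin 2 → ℂ) (c : ℂ)
    (M : Matrix (Fin (2*ℓ) → Fin 2) (Fin (2*ℓ) → Fin 2) ℂ) :
    expec ℓ n (c • M) = c * expec ℓ n M := by
  simp only [expec_eq, Matrix.smul_apply, smul_eq_mul, Finset.mul_sum]
  refine Finset.sum_congr rfl fun f _ => Finset.sum_congr rfl fun g _ => by ring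

lemma pauli_mul_self (i : Fin 3) : pauli i * pauli i = 1 := by
  fin_cases i <;>
    · ext a b
      fin_cases a <;> fin_cases b <;>
        simp [pauli, Matrix.mul_apply, Fin.sum_univ_two, Matrix.one_apply, Complex.I_mul_I]

lemma key_sum {n : Fin 2 → ℂ} (hn : ∑ i : Fin 2, ‖n i‖ ^ 2 = 1) :
    star (n 0) * n 0 + star (n 1) * n 1 = 1 := by
  have h : ∀ z : ℂ, star z * z = ((‖z‖ ^ 2 : ℝ) : ℂ) := fun z => by
    rw [Complex.star_def, Complex.conj_mul']; push_cast; ring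
  rw [Fin.sum_univ_two] at hn
  rw [h, h, ← Complex.ofReal_add, hn]; norm_num

lemma exp1_one {n : Fin 2 → ℂ} (hn : ∑ i : Fin 2, ‖n i‖ ^ 2 = 1) : exp1 n 1 = 1 := by
  have key := key_sum hn
  unfold exp1
  simp only [Matrix.one_apply, Fin.sum_univ_two, mul_ite, mul_one, mul_zero, ite_mul,
    zero_mul, one_mul]
  norm_num
  simp only [Complex.star_def] at key
  linear_combination key

lemma exp1_pauli0 (n : Fin 2 → ℂ) :
    exp1 n (pauli 0) = star (n 0) * n 1 + star (n 1) * n 0 := by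
  unfold exp1; simp [pauli, Fin.sum_univ_two]

lemma exp1_pauli1 (n : Fin 2 → ℂ) :
    exp1 n (pauli 1) = -Complex.I * (star (n 0) * n 1) + Complex.I * (star (n 1) * n 0) := by
  unfold exp1; simp [pauli, Fin.sum_univ_two]; ring

lemma exp1_pauli2 (n : Fin 2 → ℂ) :
    exp1 n (pauli 2) = star (n 0) * n 0 - star (n 1) * n 1 := by
  unfold exp1; simp [pauli, Fin.sum_univ_two]; ring

lemma sum_m_sq {n : Fin 2 → ℂ} (hn : ∑ i : Fin 2, ‖n i‖ ^ 2 = 1) :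
    ∑ i : Fin 3, (exp1 n (pauli i)) ^ 2 = 1 := by
  have key := key_sum hn
  have hab : (star (n 0) * n 1) * (star (n 1) * n 0)
      = (star (n 0) * n 0) * (star (n 1) * n 1) := by ring
  rw [Fin.sum_univ_three, exp1_pauli0, exp1_pauli1, exp1_pauli2]
  set a := star (n 0) * n 1
  set b := star (n 1) * n 0
  set d := star (n 0) * n 0
  set e := star (n 1) * n 1
  linear_combination (a^2 - 2*a*b + b^2) * Complex.I_sq + 4*hab + (d+e+1)*key

lemma expec_pauliAt {n : Fin 2 → ℂ} (hn : ∑ i : Fin 2, ‖n i‖ ^ 2 = 1)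
    (ℓ : ℕ) (p : Fin (2 * ℓ)) (i : Fin 3) :
    expec ℓ n (pauliAt ℓ p i) = exp1 n (pauli i) := by
  rw [pauliAt_eq, expec_kron]
  have : ∀ q : Fin (2 * ℓ),
      exp1 n (if q = p then pauli i else 1) = if q = p then exp1 n (pauli i) else 1 := by
    intro q; by_cases h : q = p <;> simp [h, exp1_one hn]
  simp only [this]
  rw [Finset.prod_ite_eq']
  simp

lemma expec_pauliAt_mul {n : Fin 2 → ℂ} (hn : ∑ i : Fin 2, ‖n i‖ ^ 2 = 1)
    (ℓ : ℕ) (p q : Fin (2 * ℓ)) (i : Fin 3) :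
    expec ℓ n (pauliAt ℓ p i * pauliAt ℓ q i)
      = if p = q then 1 else (exp1 n (pauli i)) ^ 2 := by
  rw [pauliAt_eq, pauliAt_eq, kron_mul, expec_kron]
  by_cases hpq : p = q
  · subst hpq
    simp only [if_pos rfl]
    refine Finset.prod_eq_one fun r _ => ?_
    by_cases h : r = p <;> simp [h, pauli_mul_self, exp1_one hn]
  · rw [if_neg hpq]
    have hqp : q ∈ (univ : Finset (Fin (2*ℓ))).erase p := by
      simp [Finset.mem_erase]; exact fun h => hpq h.symm
    set F : Fin (2*ℓ) → ℂ := fun r =>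
      exp1 n ((if r = p then pauli i else 1) * (if r = q then pauli i else 1)) with hF
    have hFp : F p = exp1 n (pauli i) := by
      simp [hF, hpq, Ne.symm hpq]
    have hFq : F q = exp1 n (pauli i) := by
      simp [hF, hpq, Ne.symm hpq]
    calc ∏ r, F r = F p * ∏ r ∈ univ.erase p, F r :=
          (Finset.mul_prod_erase univ F (Finset.mem_univ p)).symm
      _ = F p * (F q * ∏ r ∈ (univ.erase p).erase q, F r) := by
          rw [Finset.mul_prod_erase _ F hqp]
      _ = exp1 n (pauli i) ^ 2 := by
          rw [hFp, hFq]
          have : ∏ r ∈ (univ.erase p).erase q, F r = 1 := by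
            refine Finset.prod_eq_one fun r hr => ?_
            rw [Finset.mem_erase, Finset.mem_erase] at hr
            simp only [hF, if_neg hr.2.1, if_neg hr.1, one_mul]
            exact exp1_one hn
          rw [this]; ring

lemma expec_Lop {n : Fin 2 → ℂ} (hn : ∑ i : Fin 2, ‖n i‖ ^ 2 = 1) (ℏ : ℝ) (ℓ : ℕ) (i : Fin 3) :
    expec ℓ n (Lop ℏ ℓ i) = ((ℏ : ℂ) / 2) * (((2 * ℓ : ℕ) : ℂ)) * exp1 n (pauli i) := by
  unfold Lop
  rw [expec_smul, expec_sum]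
  simp only [expec_pauliAt hn, Finset.sum_const, Finset.card_univ, Fintype.card_fin,
    nsmul_eq_mul]
  ring

lemma expec_Lop_sq {n : Fin 2 → ℂ} (hn : ∑ i : Fin 2, ‖n i‖ ^ 2 = 1) (ℏ : ℝ) (ℓ : ℕ) (i : Fin 3) :
    expec ℓ n (Lop ℏ ℓ i ^ 2) = ((ℏ : ℂ) / 2) ^ 2 * (((2 * ℓ : ℕ) : ℂ))
      * ((((2 * ℓ : ℕ) : ℂ)) * exp1 n (pauli i) ^ 2 + 1 - exp1 n (pauli i) ^ 2) := by
  have hL : Lop ℏ ℓ i ^ 2 = (((ℏ : ℂ) / 2) * ((ℏ : ℂ) / 2)) •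
      ∑ p : Fin (2 * ℓ), ∑ q : Fin (2 * ℓ), pauliAt ℓ p i * pauliAt ℓ q i := by
    rw [sq]
    unfold Lop
    rw [Matrix.smul_mul, Matrix.mul_smul, smul_smul, Finset.sum_mul_sum]
  rw [hL, expec_smul, expec_sum]
  have hinner : ∀ p : Fin (2 * ℓ),
      expec ℓ n (∑ q : Fin (2 * ℓ), pauliAt ℓ p i * pauliAt ℓ q i)
        = ((2 * ℓ : ℕ) : ℂ) * exp1 n (pauli i) ^ 2 + 1 - exp1 n (pauli i) ^ 2 := by
    intro p
    rw [expec_sum]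
    simp only [expec_pauliAt_mul hn]
    have : ∀ q : Fin (2 * ℓ), (if p = q then (1:ℂ) else exp1 n (pauli i) ^ 2)
        = exp1 n (pauli i) ^ 2 + (if p = q then 1 - exp1 n (pauli i) ^ 2 else 0) := by
      intro q; by_cases h : p = q <;> simp [h]
    simp only [this, Finset.sum_add_distrib, Finset.sum_ite_eq, Finset.mem_univ, if_true,
      Finset.sum_const, Finset.card_univ, Fintype.card_fin, nsmul_eq_mul]
    ring
  simp only [hinner, Finset.sum_const, Finset.card_univ, Fintype.card_fin, nsmul_eq_mul]
  ring

lemma m_eq (n : Fin 2 → ℂ) (i : Fin 3) :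
    ∑ a : Fin 2, star (n a) * ((pauli i).mulVec n a) = exp1 n (pauli i) := by
  unfold exp1 Matrix.mulVec dotProduct
  simp only [Finset.mul_sum, mul_assoc]

/-- for the spin coherent state `|ℓ n⟩ = |n⟩^{⊗2ℓ}`,
`⟨L_i⟩ = ℏℓ n_i` (with `n_i = ⟨n|σ_i|n⟩`), the total variance is
`Σ_i (⟨L_i²⟩ - ⟨L_i⟩²) = ℏ²ℓ`, and the relative uncertainty
`Σ_i ΔL_i² / ⟨L²⟩ = 1/(ℓ+1) → 0` as `ℓ → ∞`. -/
theorem spin_coherent_expectation_and_uncertainty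
    (ℏ : ℝ) (hℏ : 0 < ℏ) (ℓ : ℕ) (hℓ : 1 ≤ ℓ) (n : Fin 2 → ℂ)
    (hn : ∑ i : Fin 2, ‖n i‖ ^ 2 = 1) :
    (∀ i : Fin 3, expec ℓ n (Lop ℏ ℓ i)
        = ((ℏ : ℂ) * ℓ) * ∑ a : Fin 2, star (n a) * ((pauli i).mulVec n a))
    ∧ (∑ i : Fin 3, (expec ℓ n (Lop ℏ ℓ i ^ 2) - (expec ℓ n (Lop ℏ ℓ i)) ^ 2))
        = (ℏ : ℂ) ^ 2 * ℓ
    ∧ (∑ i : Fin 3, (expec ℓ n (Lop ℏ ℓ i ^ 2) - (expec ℓ n (Lop ℏ ℓ i)) ^ 2))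
        / (∑ i : Fin 3, expec ℓ n (Lop ℏ ℓ i ^ 2)) = 1 / ((ℓ : ℂ) + 1)
    ∧ Tendsto (fun ℓ : ℕ => (1 : ℝ) / ((ℓ : ℝ) + 1)) atTop (nhds 0) := by
  have hsum := sum_m_sq hn
  rw [Fin.sum_univ_three] at hsum
  have hcast : ((2 * ℓ : ℕ) : ℂ) = 2 * (ℓ : ℂ) := by push_cast; ring
  have hvar : (∑ i : Fin 3, (expec ℓ n (Lop ℏ ℓ i ^ 2) - (expec ℓ n (Lop ℏ ℓ i)) ^ 2))
      = (ℏ : ℂ) ^ 2 * ℓ := by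
    rw [Fin.sum_univ_three]
    simp only [expec_Lop hn, expec_Lop_sq hn, hcast]
    linear_combination (-(ℏ:ℂ)^2 * (ℓ:ℂ) / 2) * hsum
  have hden : (∑ i : Fin 3, expec ℓ n (Lop ℏ ℓ i ^ 2))
      = (ℏ : ℂ) ^ 2 * ℓ * ((ℓ : ℂ) + 1) := by
    rw [Fin.sum_univ_three]
    simp only [expec_Lop_sq hn, hcast]
    linear_combination ((ℏ:ℂ)^2 * (ℓ:ℂ)^2 - (ℏ:ℂ)^2 * (ℓ:ℂ) / 2) * hsum
  refine ⟨fun i => ?_, hvar, ?_, tendsto_one_div_add_atTop_nhds_zero_nat⟩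
  · rw [expec_Lop hn, m_eq, hcast]; ring
  · rw [hvar, hden]
    have h1 : (ℏ : ℂ) ≠ 0 := Complex.ofReal_ne_zero.mpr hℏ.ne'
    have h2 : (ℓ : ℂ) ≠ 0 := Nat.cast_ne_zero.mpr (by omega)
    have h3 : (ℓ : ℂ) + 1 ≠ 0 := by
      intro h
      have := Nat.cast_add_one_ne_zero (R := ℂ) ℓ
      push_cast at this
      exact this h
    field_simp
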